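/- Suppose κ is regular uncountable, S, T ⊆ κ stationary, and there is a C-sequence ⟨C_δ : δ ∈ S⟩ with otp(C_δ) < κ for all δ, such that for every club D ⊆ κ there exist δ ∈ S and β < δ with nacc(C_δ) \ β ⊆ D ∩ T (tail club guessing). Then there is a C-sequence ⟨C•_δ : δ ∈ S⟩ such that: (i) otp(C•_δ) = cf(δ) for every δ ∈ S; and (ii) for every club D ⊆ κ, the set {δ ∈ S : nacc(C•_δ) ⊆ D ∩ T} is stationary in κ. -/

import Mathlib

open Set Ordinal

noncomputable section

abbrev O : Type 1 := Ordinal.{0}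

/-- `ssup A` is the strict supremum of a set of ordinals. -/
def ssup (A : Set O) : O := sSup ((· + 1) '' A)

/-- `acc⁺(A)`: accumulation points below the strict sup. -/
def accP (A : Set O) : Set O := {α | α < ssup A ∧ 0 < α ∧ sSup (A ∩ Iio α) = α}

def accOf (A : Set O) : Set O := A ∩ accP A

def nacc (A : Set O) : Set O := A \ accOf A

def clOf (A : Set O) : Set O := A ∪ accP A

/-- order type of a set of ordinals -/
def otp (A : Set O) : Ordinal.{1} := Ordinal.type (Subrel ((· < ·) : O → O → Prop) (· ∈ A))

/-- lift a small ordinal one universe up -/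
def olift (a : O) : Ordinal.{1} := Ordinal.lift.{1} a

/-- `suc_σ(A)`: elements of `A` whose index in `A` is `j+1` for some `j < σ`. -/
def sucSet (σ : Ordinal.{1}) (A : Set O) : Set O := {β | β ∈ A ∧ ∃ j < σ, otp (A ∩ Iio β) = j + 1}

def UnbIn (A : Set O) (δ : O) : Prop := ∀ α < δ, ∃ β ∈ A, α < β ∧ β < δ

def IsClubIn (C : Set O) (δ : O) : Prop :=
  C ⊆ Iio δ ∧ UnbIn C δ ∧ ∀ α < δ, 0 < α → sSup (C ∩ Iio α) = α → α ∈ C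

def IsStatIn (S : Set O) (δ : O) : Prop :=
  S ⊆ Iio δ ∧ ∀ D, IsClubIn D δ → (S ∩ D).Nonempty

def Ecof (κ : O) (lam : Cardinal.{0}) : Set O := {δ | δ < κ ∧ δ.cof = lam}

def PhiSup (B x : Set O) : Set O :=
  if sSup (x ∩ B) = sSup x then clOf (x ∩ B) else x \ Iio (sSup (x ∩ B))

def PhiD (D x : Set O) : Set O :=
  if sSup (D ∩ Iio (sSup x)) = sSup x then
    {γ | ∃ η ∈ x, sInf D < η ∧ γ = sSup (D ∩ Iio η)}
  else x \ Iio (sSup (D ∩ Iio (sSup x)))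

/-- `cf(δ)`-additive proper ideal on `δ` extending the bounded ideal. -/
def GoodIdeal (δ : O) (J : Set (Set O)) : Prop :=
  (∀ A B : Set O, A ⊆ B → B ∈ J → A ∈ J) ∧
  (Iio δ ∉ J) ∧
  (∀ B : Set O, B ⊆ Iio δ → sSup B < δ → B ∈ J) ∧
  (∀ ξ < (Ordinal.cof δ).ord, ∀ f : O → Set O, (∀ i < ξ, f i ∈ J) → (⋃ i ∈ Iio ξ, f i) ∈ J)

namespace Aux

lemma bddAbove_of_subset_Iio {A : Set O} {δ : O} (h : A ⊆ Iio δ) : BddAbove A :=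
  ⟨δ, fun _ hx => (h hx).le⟩

lemma sSup_eq_of_unb {Y : Set O} {δ : O} (hY : Y ⊆ Iio δ) (h0 : 0 < δ)
    (hunb : ∀ α < δ, ∃ y ∈ Y, α < y) : sSup Y = δ := by
  obtain ⟨y0, hy0, -⟩ := hunb 0 h0
  apply le_antisymm
  · exact csSup_le ⟨y0, hy0⟩ fun y hy => (hY hy).le
  · refine le_of_forall_lt fun a ha => ?_
    obtain ⟨y, hy, hay⟩ := hunb a ha
    exact hay.trans_le (le_csSup (bddAbove_of_subset_Iio hY) hy)

lemma unb_of_sSup_eq {Y : Set O} {α : O} (h0 : 0 < α) (hs : sSup Y = α) :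
    ∀ c < α, ∃ y ∈ Y, c < y := by
  intro c hc
  rcases Y.eq_empty_or_nonempty with rfl | hne
  · simp only [csSup_empty] at hs
    exact absurd (hs ▸ h0) (lt_irrefl _)
  · exact exists_lt_of_lt_csSup hne (hs.symm ▸ hc)

lemma mem_of_closed {F : Set O} {k α : O} (hF : IsClubIn F k) (hα : α < k) (h0 : 0 < α)
    (hunb : ∀ c < α, ∃ y ∈ F ∩ Iio α, c < y) : α ∈ F := by
  refine hF.2.2 α hα h0 (sSup_eq_of_unb (fun y hy => hy.2) h0 hunb)

lemma nacc_unb {Cs : Set O} {δ : O} (hC : IsClubIn Cs δ) :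
    ∀ α < δ, ∃ y ∈ nacc Cs, α < y ∧ y < δ := by
  intro α hα
  obtain ⟨b, hb, hab, hbδ⟩ := hC.2.1 α hα
  set Y : Set O := {x | x ∈ Cs ∧ α < x} with hYdef
  have hYne : Y.Nonempty := ⟨b, hb, hab⟩
  set y := sInf Y with hy
  have hyY : y ∈ Y := csInf_mem hYne
  refine ⟨y, ⟨hyY.1, ?_⟩, hyY.2, hC.1 hyY.1⟩
  rintro ⟨-, -, -, hsup⟩
  have hsub : Cs ∩ Iio y ⊆ Iic α := by
    rintro x ⟨hx1, hx2⟩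
    by_contra hgt
    exact absurd (csInf_le (OrderBot.bddBelow Y) ⟨hx1, not_le.1 hgt⟩)
      (not_le.2 hx2)
  have : sSup (Cs ∩ Iio y) ≤ α := by
    rcases (Cs ∩ Iio y).eq_empty_or_nonempty with he | hne
    · rw [he, csSup_empty]; exact (zero_le : (0:O) ≤ α)
    · exact csSup_le hne hsub
  rw [hsup] at this
  exact absurd this (not_le.2 hyY.2)

lemma isLimit_of_club {Cs : Set O} {δ : O} (hC : IsClubIn Cs δ) (h0 : δ ≠ 0) : Order.IsSuccLimit δ := by
  rcases Ordinal.zero_or_succ_or_isSuccLimit δ with rfl | ⟨a, rfl⟩ | h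
  · exact absurd rfl h0
  · obtain ⟨b, -, hab, hb⟩ := hC.2.1 a (Order.lt_succ a)
    exact absurd hb (not_lt.2 (Order.succ_le_of_lt hab)).elim
  · exact h

end Aux

namespace Aux

/-- sup of a short image is small -/
lemma sSup_image_lt {i c : O} (f : O → O) (hi : i.card < Ordinal.cof c)
    (hf : ∀ j < i, f j < c) (hc : 0 < c) : sSup (f '' Iio i) < c := by
  rcases eq_or_ne i 0 with rfl | hne
  · rw [show Iio (0 : O) = ∅ by ext x; simp, image_empty, csSup_empty]
    exact hc
  · have h0i : 0 < i := pos_iff_ne_zero.2 hne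
    have hb : Ordinal.bsup i (fun j _ => f j) < c := Ordinal.bsup_lt_ord hi (fun j hj => hf j hj)
    refine lt_of_le_of_lt ?_ hb
    refine csSup_le ⟨f 0, mem_image_of_mem f h0i⟩ ?_
    rintro y ⟨j, hj, rfl⟩
    exact Ordinal.le_bsup (fun j _ => f j) j hj

/-- sup of a countable family is small when cofinality is uncountable -/
lemma sSup_range_nat_lt {k : O} (γ : ℕ → O) (hcof : Cardinal.aleph0 < Ordinal.cof k)
    (hγ : ∀ n, γ n < k) : sSup (Set.range γ) < k := by
  have := Ordinal.iSup_lt_ord (f := γ) (by rwa [Cardinal.mk_nat]) hγ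
  simpa [iSup] using this

variable {k : O} (hcof : Cardinal.aleph0 < Ordinal.cof k)

include hcof in
lemma isLimit_of_cof : Order.IsSuccLimit k := Ordinal.aleph0_le_cof.1 hcof.le

include hcof in
lemma club_inter {D E : Set O} (hD : IsClubIn D k) (hE : IsClubIn E k) :
    IsClubIn (D ∩ E) k := by
  have hk0 : (0:O) < k := (isLimit_of_cof hcof).pos
  refine ⟨fun x hx => hD.1 hx.1, ?_, ?_⟩
  · -- unbounded
    intro α hα
    -- next functions
    set d : O → O := fun ξ => sInf {y | y ∈ D ∧ ξ < y} with hd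
    set e : O → O := fun ξ => sInf {y | y ∈ E ∧ ξ < y} with he
    have hdm : ∀ ξ < k, d ξ ∈ D ∧ ξ < d ξ := by
      intro ξ hξ
      obtain ⟨b, hb, h1, h2⟩ := hD.2.1 ξ hξ
      exact csInf_mem (s := {y | y ∈ D ∧ ξ < y}) ⟨b, hb, h1⟩
    have hem : ∀ ξ < k, e ξ ∈ E ∧ ξ < e ξ := by
      intro ξ hξ
      obtain ⟨b, hb, h1, h2⟩ := hE.2.1 ξ hξ
      exact csInf_mem (s := {y | y ∈ E ∧ ξ < y}) ⟨b, hb, h1⟩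
    set γ : ℕ → O := fun n => Nat.rec α (fun _ ih => e (d ih)) n with hγ
    have hγk : ∀ n, γ n < k := by
      intro n
      induction n with
      | zero => exact hα
      | succ n ih =>
        exact hE.1 (hem _ (hD.1 (hdm _ ih).1)).1
    have hγsucc : ∀ n, γ n < γ (n+1) := by
      intro n
      have h1 := (hdm _ (hγk n)).2
      have h2 := (hem _ (hD.1 (hdm _ (hγk n)).1)).2
      exact h1.trans h2
    have hγmono : StrictMono γ := strictMono_nat_of_lt_succ hγsucc
    set σ := sSup (Set.range γ) with hσ
    have hσk : σ < k := sSup_range_nat_lt γ hcof hγk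
    have hγle : ∀ n, γ n ≤ σ := fun n => le_csSup (bddAbove_of_subset_Iio
      (fun y ⟨n, hn⟩ => hn ▸ hγk n)) ⟨n, rfl⟩
    have hγlt : ∀ n, γ n < σ := fun n => lt_of_lt_of_le (hγsucc n) (hγle (n+1))
    have hσ0 : 0 < σ := lt_of_le_of_lt ((zero_le : (0:O) ≤ α)) (hγlt 0)
    have hασ : α < σ := hγlt 0
    -- σ ∈ D
    have hσD : σ ∈ D := by
      refine mem_of_closed hD hσk hσ0 ?_
      intro c hc
      obtain ⟨y, ⟨n, rfl⟩, hcy⟩ := unb_of_sSup_eq hσ0 hσ.symm c hc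
      refine ⟨d (γ n), ⟨(hdm _ (hγk n)).1, ?_⟩, hcy.trans (hdm _ (hγk n)).2⟩
      have : d (γ n) ≤ γ (n+1) := le_of_lt (hem _ (hD.1 (hdm _ (hγk n)).1)).2
      exact lt_of_le_of_lt this (hγlt (n+1))
    have hσE : σ ∈ E := by
      refine mem_of_closed hE hσk hσ0 ?_
      intro c hc
      obtain ⟨y, ⟨n, rfl⟩, hcy⟩ := unb_of_sSup_eq hσ0 hσ.symm c hc
      refine ⟨γ (n+1), ⟨(hem _ (hD.1 (hdm _ (hγk n)).1)).1, hγlt (n+1)⟩, ?_⟩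
      exact hcy.trans ((hγsucc n))
    exact ⟨σ, ⟨hσD, hσE⟩, hασ, hσk⟩
  · -- closed
    intro α hα h0 hsup
    have hunb := unb_of_sSup_eq h0 hsup
    refine ⟨mem_of_closed hD hα h0 ?_, mem_of_closed hE hα h0 ?_⟩
    · intro c hc
      obtain ⟨y, hy, hcy⟩ := hunb c hc
      exact ⟨y, ⟨hy.1.1, hy.2⟩, hcy⟩
    · intro c hc
      obtain ⟨y, hy, hcy⟩ := hunb c hc
      exact ⟨y, ⟨hy.1.2, hy.2⟩, hcy⟩

end Aux

namespace Aux

variable {k : O}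

lemma club_diag (hcof : Cardinal.aleph0 < Ordinal.cof k)
    (hreg : ∀ ξ < k, ξ.card < Ordinal.cof k)
    (F : O → Set O) (hF : ∀ b < k, IsClubIn (F b) k) :
    IsClubIn {α | α < k ∧ ∀ b < α, α ∈ F b} k := by
  have hklim : Order.IsSuccLimit k := isLimit_of_cof hcof
  refine ⟨fun x hx => hx.1, ?_, ?_⟩
  · -- unbounded
    intro α hα
    set nxt : O → O → O := fun b ξ => sInf {y | y ∈ F b ∧ ξ < y} with hnxt
    have hnxtm : ∀ b < k, ∀ ξ < k, nxt b ξ ∈ F b ∧ ξ < nxt b ξ := by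
      intro b hb ξ hξ
      obtain ⟨y, hy, h1, h2⟩ := (hF b hb).2.1 ξ hξ
      exact csInf_mem (s := {y | y ∈ F b ∧ ξ < y}) ⟨y, hy, h1⟩
    set h : O → O := fun ξ => sSup ((fun b => nxt b ξ) '' Iio ξ) with hh
    have hhk : ∀ ξ < k, h ξ < k := by
      intro ξ hξ
      refine sSup_image_lt _ (hreg ξ hξ) (fun j hj => (hF j (hj.trans hξ)).1
        (hnxtm j (hj.trans hξ) ξ hξ).1) hklim.pos
    set γ : ℕ → O := fun n => Nat.rec (α+1) (fun _ ih => max (ih + 1) (h ih)) n with hγ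
    have hγk : ∀ n, γ n < k := by
      intro n
      induction n with
      | zero => exact hklim.succ_lt hα
      | succ n ih => exact max_lt (hklim.succ_lt ih) (hhk _ ih)
    have hγsucc : ∀ n, γ n < γ (n+1) :=
      fun n => lt_of_lt_of_le (Order.lt_succ (γ n)) (le_max_left _ _)
    have hγmono : StrictMono γ := strictMono_nat_of_lt_succ hγsucc
    set σ := sSup (Set.range γ) with hσ
    have hσk : σ < k := sSup_range_nat_lt γ hcof hγk
    have hγle : ∀ n, γ n ≤ σ := fun n => le_csSup (bddAbove_of_subset_Iio
      (fun y ⟨n, hn⟩ => hn ▸ hγk n)) ⟨n, rfl⟩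
    have hγlt : ∀ n, γ n < σ := fun n => lt_of_lt_of_le (hγsucc n) (hγle (n+1))
    have hσ0 : 0 < σ := lt_of_le_of_lt zero_le (hγlt 0)
    refine ⟨σ, ⟨hσk, ?_⟩, lt_of_lt_of_le (Order.lt_succ α) (hγle 0), hσk⟩
    intro b hb
    have hbk : b < k := hb.trans hσk
    obtain ⟨y, ⟨n, rfl⟩, hby⟩ := unb_of_sSup_eq hσ0 hσ.symm b hb
    refine mem_of_closed (hF b hbk) hσk hσ0 ?_
    intro c hc
    obtain ⟨y, ⟨m, rfl⟩, hcy⟩ := unb_of_sSup_eq hσ0 hσ.symm c hc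
    set M := max n m with hM
    have hbM : b < γ M := lt_of_lt_of_le hby (hγmono.monotone (le_max_left n m))
    have hcM : c < γ M := lt_of_lt_of_le hcy (hγmono.monotone (le_max_right n m))
    have hmem := hnxtm b hbk (γ M) (hγk M)
    have hle : nxt b (γ M) ≤ h (γ M) := by
      refine le_csSup ?_ (mem_image_of_mem _ hbM)
      refine bddAbove_of_subset_Iio (δ := k) ?_
      rintro y ⟨b', hb', rfl⟩
      exact (hF b' (hb'.trans (hγk M))).1 (hnxtm b' (hb'.trans (hγk M)) (γ M) (hγk M)).1
    have hlt : nxt b (γ M) < σ :=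
      lt_of_le_of_lt (hle.trans (le_max_right _ _)) (hγlt (M+1))
    exact ⟨nxt b (γ M), ⟨hmem.1, hlt⟩, hcM.trans hmem.2⟩
  · -- closed
    intro α hα h0 hsup
    have hunb := unb_of_sSup_eq h0 hsup
    refine ⟨hα, fun b hb => ?_⟩
    refine mem_of_closed (hF b (hb.trans hα)) hα h0 ?_
    intro c hc
    obtain ⟨y, hy, hcy⟩ := hunb (max b c) (max_lt hb hc)
    exact ⟨y, ⟨hy.1.2 b (lt_of_le_of_lt (le_max_left b c) hcy), hy.2⟩,
      lt_of_le_of_lt (le_max_right b c) hcy⟩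

end Aux

namespace Aux

/-- the recursive sequence used to build the thin club -/
def seqx (A : Set O) (t : O) (g : O → O) (i : O) : O :=
  Ordinal.limitRecOn i (sInf {y | y ∈ A ∧ max t (g 0) < y})
    (fun j xj => sInf {y | y ∈ A ∧ max (max t (g (Order.succ j))) xj < y})
    (fun i _ ih => sSup {y | ∃ j, ∃ h : j < i, ih j h = y})

lemma seqx_zero (A : Set O) (t : O) (g : O → O) :
    seqx A t g 0 = sInf {y | y ∈ A ∧ max t (g 0) < y} :=
  Ordinal.limitRecOn_zero _ _ _

lemma seqx_succ (A : Set O) (t : O) (g : O → O) (j : O) :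
    seqx A t g (Order.succ j) =
      sInf {y | y ∈ A ∧ max (max t (g (Order.succ j))) (seqx A t g j) < y} :=
  Ordinal.limitRecOn_succ _ _ _ _

lemma seqx_limit (A : Set O) (t : O) (g : O → O) {i : O} (h : Order.IsSuccLimit i) :
    seqx A t g i = sSup (seqx A t g '' Iio i) := by
  rw [seqx, Ordinal.limitRecOn_limit _ _ _ _ h]
  congr 1
  ext y
  simp only [Set.mem_setOf_eq, Set.mem_image, Set.mem_Iio]
  constructor
  · rintro ⟨j, hj, rfl⟩; exact ⟨j, hj, rfl⟩
  · rintro ⟨j, hj, rfl⟩; exact ⟨j, hj, rfl⟩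

lemma not_isLimit_succ' (j : O) : ¬ Order.IsSuccLimit (Order.succ j) :=
  fun h => absurd (h.succ_lt (Order.lt_succ j)) (lt_irrefl _)

lemma build {δ : O} (hδ : Order.IsSuccLimit δ) {A : Set O} (hA1 : A ⊆ Iio δ)
    (hA2 : ∀ α < δ, ∃ y ∈ A, α < y ∧ y < δ) {t : O} (ht : t < δ) :
    ∃ X : Set O, IsClubIn X δ ∧ otp X = olift (Ordinal.cof δ).ord ∧ nacc X ⊆ A ∩ Ioi t := by
  set L := (Ordinal.cof δ).ord with hL
  have hLlim : Order.IsSuccLimit L := Cardinal.isSuccLimit_ord (Ordinal.aleph0_le_cof.2 hδ)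
  obtain ⟨f, hf⟩ := Ordinal.exists_fundamental_sequence δ
  set g : O → O := fun i => if h : i < L then f i h else 0 with hg
  have hglt : ∀ i < L, g i < δ := by
    intro i hi
    simpa [hg, dif_pos hi] using hf.lt hi
  have hgmono : ∀ i j, i < L → j < L → i < j → g i < g j := by
    intro i j hi hj hij
    simpa [hg, dif_pos hi, dif_pos hj] using hf.2.1 hi hj hij
  have hgcof : ∀ α < δ, ∃ i, i < L ∧ α ≤ g i := by
    intro α hα
    have h2 : α < Ordinal.blsub L f := by rw [hf.2.2]; exact hα
    obtain ⟨i, hi, hle⟩ := Ordinal.lt_blsub_iff.1 h2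
    exact ⟨i, hi, by simpa [hg, dif_pos hi] using hle⟩
  set x : O → O := seqx A t g with hx
  -- main invariant
  have hP : ∀ i, i < L → x i < δ ∧ (∀ j < i, x j < x i) ∧
      (¬ Order.IsSuccLimit i → x i ∈ A ∧ max t (g i) < x i) := by
    intro i
    induction i using Ordinal.induction with
    | _ i IH =>
      intro hiL
      rcases Ordinal.zero_or_succ_or_isSuccLimit i with rfl | ⟨j, rfl⟩ | hil
      · have hbd : max t (g 0) < δ := max_lt ht (hglt 0 hLlim.pos)
        obtain ⟨y, hy, h1, h2⟩ := hA2 _ hbd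
        have hmem : x 0 ∈ {y | y ∈ A ∧ max t (g 0) < y} := by
          rw [hx, seqx_zero]
          exact csInf_mem ⟨y, hy, h1⟩
        exact ⟨hA1 hmem.1, fun j hj => absurd hj (not_lt.2 ((zero_le : (0:O) ≤ j))), fun _ => hmem⟩
      · have hjsucc : j < Order.succ j := Order.lt_succ j
        have hjL : j < L := hjsucc.trans hiL
        obtain ⟨hxjδ, hxjmono, -⟩ := IH j hjsucc hjL
        have hbd : max (max t (g (Order.succ j))) (x j) < δ :=
          max_lt (max_lt ht (hglt _ hiL)) hxjδ
        obtain ⟨y, hy, h1, h2⟩ := hA2 _ hbd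
        have hmem : x (Order.succ j) ∈
            {y | y ∈ A ∧ max (max t (g (Order.succ j))) (x j) < y} := by
          rw [hx, seqx_succ]
          exact csInf_mem ⟨y, hy, h1⟩
        have hgt : x j < x (Order.succ j) := lt_of_le_of_lt (le_max_right _ _) hmem.2
        refine ⟨hA1 hmem.1, ?_, fun _ => ⟨hmem.1,
          lt_of_le_of_lt (le_max_left _ _) hmem.2⟩⟩
        intro j' hj'
        rcases lt_or_eq_of_le (Order.lt_succ_iff.1 hj') with h | rfl
        · exact (hxjmono j' h).trans hgt
        · exact hgt
      · have hxeq : x i = sSup (x '' Iio i) := seqx_limit A t g hil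
        have hlt : ∀ j < i, x j < δ := fun j hj => (IH j hj (hj.trans hiL)).1
        have hxiδ : x i < δ := by
          rw [hxeq]
          exact sSup_image_lt x (Cardinal.lt_ord.1 hiL) hlt hδ.pos
        have hbdd : BddAbove (x '' Iio i) := by
          refine bddAbove_of_subset_Iio (δ := δ) ?_
          rintro y ⟨j, hj, rfl⟩
          exact hlt j hj
        refine ⟨hxiδ, ?_, fun h => absurd hil h⟩
        intro j hj
        have hsj : Order.succ j < i := hil.succ_lt hj
        have h1 : x j < x (Order.succ j) :=
          (IH _ hsj (hsj.trans hiL)).2.1 j (Order.lt_succ j)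
        have h2 : x (Order.succ j) ≤ x i := by
          rw [hxeq]
          exact le_csSup hbdd (Set.mem_image_of_mem x hsj)
        exact h1.trans_le h2
  have hmono : ∀ i j, i < L → j < L → i < j → x i < x j :=
    fun i j _ hj hij => (hP j hj).2.1 i hij
  have hmono' : ∀ i j, i < L → j < L → x i < x j → i < j := by
    intro i j hi hj hlt
    by_contra hle
    rcases lt_or_eq_of_le (not_lt.1 hle) with h | rfl
    · exact absurd (hmono j i hj hi h) (not_lt.2 hlt.le)
    · exact absurd hlt (lt_irrefl _)
  set X : Set O := x '' Iio L with hX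
  have hXsub : X ⊆ Iio δ := by rintro y ⟨j, hj, rfl⟩; exact (hP j hj).1
  have hXunb : UnbIn X δ := by
    intro α hα
    obtain ⟨i, hi, hle⟩ := hgcof α hα
    have hsi : Order.succ i < L := hLlim.succ_lt hi
    have h1 : g i < g (Order.succ i) := hgmono _ _ hi hsi (Order.lt_succ i)
    have h2 : max t (g (Order.succ i)) < x (Order.succ i) :=
      ((hP _ hsi).2.2 (not_isLimit_succ' i)).2
    refine ⟨x (Order.succ i), Set.mem_image_of_mem x hsi, ?_, (hP _ hsi).1⟩
    exact lt_of_le_of_lt (hle.trans h1.le) (lt_of_le_of_lt (le_max_right _ _) h2)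
  -- key: initial segments
  have hseg : ∀ i < L, X ∩ Iio (x i) = x '' Iio i := by
    intro i hi
    ext y
    constructor
    · rintro ⟨⟨j, hj, rfl⟩, hyi⟩
      exact Set.mem_image_of_mem x (hmono' j i hj hi hyi)
    · rintro ⟨j, hj, rfl⟩
      exact ⟨Set.mem_image_of_mem x (hj.trans hi), hmono j i (hj.trans hi) hi hj⟩
  refine ⟨X, ⟨hXsub, hXunb, ?_⟩, ?_, ?_⟩
  · -- closed
    intro α hα h0 hsup
    set I : Set O := {i | i < L ∧ α ≤ x i} with hI
    have hIne : I.Nonempty := by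
      obtain ⟨y, ⟨i, hi, rfl⟩, h1, h2⟩ := hXunb α hα
      exact ⟨i, hi, h1.le⟩
    set i₀ := sInf I with hi₀def
    have hi₀ : i₀ ∈ I := csInf_mem hIne
    have hseg' : X ∩ Iio α = x '' Iio i₀ := by
      ext y
      constructor
      · rintro ⟨⟨j, hj, rfl⟩, hyα⟩
        have hji : j < i₀ := by
          by_contra hle
          have h2 : x i₀ ≤ x j := by
            rcases lt_or_eq_of_le (not_lt.1 hle) with h | rfl
            · exact (hmono i₀ j hi₀.1 hj h).le
            · exact le_rfl
          exact absurd (lt_of_le_of_lt (hi₀.2.trans h2) hyα) (lt_irrefl _)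
        exact Set.mem_image_of_mem x hji
      · rintro ⟨j, hj, rfl⟩
        have hjL : j < L := hj.trans hi₀.1
        have hjI : j ∉ I := fun hmem => absurd (csInf_le (OrderBot.bddBelow I) hmem) (not_le.2 hj)
        have : ¬ α ≤ x j := fun h => hjI ⟨hjL, h⟩
        exact ⟨Set.mem_image_of_mem x hjL, not_le.1 this⟩
    rcases Ordinal.zero_or_succ_or_isSuccLimit i₀ with h0' | ⟨j, hj⟩ | hil
    · rw [h0'] at hseg'
      rw [hseg', show x '' Iio (0:O) = ∅ by simp [Set.eq_empty_iff_forall_notMem],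
        csSup_empty] at hsup
      exact absurd (hsup ▸ h0) (lt_irrefl _)
    · exfalso
      have hjlt : j < i₀ := hj ▸ Order.lt_succ j
      have hjL : j < L := hjlt.trans hi₀.1
      have hxj : x j < α := by
        have hjI : j ∉ I := fun hmem =>
          absurd (csInf_le (OrderBot.bddBelow I) hmem) (not_le.2 hjlt)
        exact not_le.1 fun h => hjI ⟨hjL, h⟩
      have : sSup (x '' Iio i₀) = x j := by
        rw [← hj]
        apply le_antisymm
        · refine csSup_le ⟨x j, Set.mem_image_of_mem x (Order.lt_succ j)⟩ ?_
          rintro y ⟨j', hj', rfl⟩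
          rcases lt_or_eq_of_le (Order.lt_succ_iff.1 (Set.mem_Iio.1 hj')) with h | rfl
          · exact (hmono j' j (h.trans hjL) hjL h).le
          · exact le_rfl
        · exact le_csSup (bddAbove_of_subset_Iio (δ := δ)
            (by rintro y ⟨j', hj', rfl⟩
                exact (hP j' ((Order.lt_succ_iff.1 (Set.mem_Iio.1 hj')).trans_lt hjL)).1))
            (Set.mem_image_of_mem x (Order.lt_succ j))
      rw [hseg', this] at hsup
      exact absurd (hsup ▸ hxj) (lt_irrefl _)
    · have h1 : x i₀ = sSup (x '' Iio i₀) := seqx_limit A t g hil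
      have : x i₀ = α := by rw [h1, ← hseg', hsup]
      exact this ▸ Set.mem_image_of_mem x hi₀.1
  · -- order type
    have hbij : Function.Bijective
        (fun p : {j : O // j ∈ Iio L} => (⟨x p.1, Set.mem_image_of_mem x p.2⟩ : {y : O // y ∈ X})) := by
      constructor
      · rintro ⟨a, ha⟩ ⟨b, hb⟩ hab
        simp only [Subtype.mk.injEq] at hab ⊢
        by_contra hne
        rcases lt_or_gt_of_ne hne with h | h
        · exact absurd (hmono a b ha hb h) (hab ▸ lt_irrefl _)
        · exact absurd (hmono b a hb ha h) (hab ▸ lt_irrefl _)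
      · rintro ⟨y, j, hj, rfl⟩
        exact ⟨⟨j, hj⟩, rfl⟩
    have hiso : Nonempty ((Subrel ((· < ·) : O → O → Prop) (· ∈ Iio L)) ≃r
        (Subrel ((· < ·) : O → O → Prop) (· ∈ X))) := by
      refine ⟨RelIso.mk (Equiv.ofBijective _ hbij) ?_⟩
      rintro ⟨a, ha⟩ ⟨b, hb⟩
      constructor
      · exact fun h => hmono' a b ha hb h
      · exact fun h => hmono a b ha hb h
    have h1 : otp X = otp (Iio L) := by
      rw [otp, otp]
      exact (Ordinal.type_eq.2 (hiso.map RelIso.symm)).symm ▸ rfl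
    rw [h1, otp]
    exact Ordinal.type_lt_Iio L
  · -- nacc
    rintro y hy
    obtain ⟨⟨i, hi, rfl⟩, hnacc⟩ := hy
    rcases Ordinal.zero_or_succ_or_isSuccLimit i with h0' | ⟨j, hj⟩ | hil
    · have := (hP i hi).2.2 (by rw [h0']; exact fun h => lt_irrefl _ h.pos)
      exact ⟨this.1, lt_of_le_of_lt (le_max_left _ _) this.2⟩
    · have := (hP i hi).2.2 (by rw [← hj]; exact not_isLimit_succ' j)
      exact ⟨this.1, lt_of_le_of_lt (le_max_left _ _) this.2⟩
    · exfalso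
      apply hnacc
      have hx0 : 0 < x 0 := lt_of_le_of_lt zero_le
        ((hP 0 hLlim.pos).2.2 (fun h => lt_irrefl _ h.pos)).2
      refine ⟨Set.mem_image_of_mem x hi, ?_, ?_, ?_⟩
      · -- x i < ssup X
        have hmem : x i + 1 ∈ (· + 1) '' X := ⟨x i, Set.mem_image_of_mem x hi, rfl⟩
        have hbdd : BddAbove ((· + 1) '' X) := by
          refine ⟨δ, ?_⟩
          rintro z ⟨w, hw, rfl⟩
          exact Order.add_one_le_of_lt (hXsub hw)
        exact lt_of_lt_of_le (lt_add_one _) (le_csSup hbdd hmem)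
      · exact lt_trans hx0 (hmono 0 i hLlim.pos hi hil.pos)
      · rw [hseg i hi]
        exact (seqx_limit A t g hil).symm

end Aux


/-- tail club-guessing yields guessing with minimal ordertypes and
stationarily many guesses. -/
theorem statement4 (κ : Cardinal.{0}) (hκ : κ.IsRegular) (hκ1 : Cardinal.aleph0 < κ)
    (S T : Set O) (hS : IsStatIn S κ.ord) (hT : IsStatIn T κ.ord)
    (C : O → Set O)
    (hC : ∀ δ ∈ S, IsClubIn (C δ) δ ∧ otp (C δ) < olift κ.ord)
    (hguess : ∀ D, IsClubIn D κ.ord → ∃ δ ∈ S, ∃ β < δ, nacc (C δ) \ Iio β ⊆ D ∩ T) :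
    ∃ C' : O → Set O,
      (∀ δ ∈ S, IsClubIn (C' δ) δ ∧ otp (C' δ) = olift (Ordinal.cof δ).ord) ∧
      ∀ D, IsClubIn D κ.ord → IsStatIn {δ ∈ S | nacc (C' δ) ⊆ D ∩ T} κ.ord := by
  have hkcof : Cardinal.aleph0 < Ordinal.cof κ.ord := by rw [hκ.cof_eq]; exact hκ1
  have hreg : ∀ ξ < κ.ord, ξ.card < Ordinal.cof κ.ord := by
    intro ξ hξ; rw [hκ.cof_eq]; exact Cardinal.lt_ord.1 hξ
  have hSlim : ∀ δ ∈ S, δ ≠ 0 → Order.IsSuccLimit δ :=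
    fun δ hδ h0 => Aux.isLimit_of_club (hC δ hδ).1 h0
  -- CLAIM: a single tail-parameter works for all clubs
  have claim : ∃ β : O, ∀ D, IsClubIn D κ.ord →
      IsStatIn {δ | δ ∈ S ∧ β < δ ∧ nacc (C δ) \ Iio (β + 1) ⊆ D ∩ T} κ.ord := by
    by_contra hcon
    push_neg at hcon
    choose Dm hDm hnot using hcon
    have hE : ∀ β, ∃ E, IsClubIn E κ.ord ∧
        ∀ δ, δ ∈ S → β < δ → nacc (C δ) \ Iio (β + 1) ⊆ Dm β ∩ T → δ ∉ E := by
      intro β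
      have hsub : {δ | δ ∈ S ∧ β < δ ∧ nacc (C δ) \ Iio (β + 1) ⊆ Dm β ∩ T} ⊆ Iio κ.ord :=
        fun δ hδ => hS.1 hδ.1
      have h2 : ¬ ∀ D, IsClubIn D κ.ord →
          ({δ | δ ∈ S ∧ β < δ ∧ nacc (C δ) \ Iio (β + 1) ⊆ Dm β ∩ T} ∩ D).Nonempty :=
        fun hall => hnot β ⟨hsub, hall⟩
      push_neg at h2
      obtain ⟨E, hEclub, hEemp⟩ := h2
      refine ⟨E, hEclub, fun δ h1 h2' h3 hmem => ?_⟩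
      rw [Set.eq_empty_iff_forall_notMem] at hEemp
      exact hEemp δ ⟨⟨h1, h2', h3⟩, hmem⟩
    choose E hEclub hEdis using hE
    set F : O → Set O := fun b => Dm b ∩ E b with hF
    have hFclub : ∀ b < κ.ord, IsClubIn (F b) κ.ord :=
      fun b _ => Aux.club_inter hkcof (hDm b) (hEclub b)
    have hΔ := Aux.club_diag hkcof hreg F hFclub
    obtain ⟨δ, hδS, β, hβδ, hsub⟩ := hguess _ hΔ
    have hδ0 : δ ≠ 0 := fun h => not_lt.2 ((zero_le : (0:O) ≤ β)) (h ▸ hβδ)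
    have hδlim := hSlim δ hδS hδ0
    have hCδ := (hC δ hδS).1
    have hδk : δ < κ.ord := hS.1 hδS
    have hδΔ : δ ∈ {α | α < κ.ord ∧ ∀ b < α, α ∈ F b} := by
      refine Aux.mem_of_closed hΔ hδk hδlim.pos ?_
      intro c hc
      obtain ⟨y, hy, h1, h2⟩ := Aux.nacc_unb hCδ (max c β) (max_lt hc hβδ)
      have hyΔ := hsub ⟨hy, fun hmem => absurd (Set.mem_Iio.1 hmem)
        (not_lt.2 (((le_max_right c β).trans h1.le)))⟩
      exact ⟨y, ⟨hyΔ.1, h2⟩, lt_of_le_of_lt (le_max_left c β) h1⟩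
    have hδE : δ ∈ E β := (hδΔ.2 β hβδ).2
    refine hEdis β δ hδS hβδ ?_ hδE
    intro γ hγ
    have hγβ : β < γ := by
      have h4 : β + 1 ≤ γ := not_lt.1 (fun h => hγ.2 (Set.mem_Iio.2 h))
      exact lt_of_lt_of_le (lt_add_one β) h4
    have hγ' := hsub ⟨hγ.1, fun hmem => absurd (Set.mem_Iio.1 hmem) (not_lt.2 hγβ.le)⟩
    exact ⟨(hγ'.1.2 β hγβ).1, hγ'.2⟩
  obtain ⟨β₀, hβ₀⟩ := claim
  -- build the new C-sequence
  have hbuild : ∀ δ, ∃ X : Set O, δ ∈ S → IsClubIn X δ ∧ otp X = olift (Ordinal.cof δ).ord ∧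
      (β₀ < δ → nacc X ⊆ nacc (C δ) ∩ Ioi β₀) := by
    intro δ
    rcases Classical.em (δ ∈ S) with hδS | h
    · rcases eq_or_ne δ 0 with rfl | h0
      · refine ⟨∅, fun _ => ⟨⟨Set.empty_subset _, ?_, ?_⟩, ?_, ?_⟩⟩
        · exact fun α hα => absurd hα (not_lt.2 ((zero_le : (0:O) ≤ α)))
        · exact fun α hα => absurd hα (not_lt.2 ((zero_le : (0:O) ≤ α)))
        · rw [otp, Ordinal.type_eq_zero_of_empty, Ordinal.cof_zero, Cardinal.ord_zero, olift,
            Ordinal.lift_zero]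
        · exact fun h => absurd h (not_lt.2 ((zero_le : (0:O) ≤ β₀)))
      · have hδlim := hSlim δ hδS h0
        have hCδ := (hC δ hδS).1
        set t : O := if β₀ < δ then β₀ + 1 else 0 with htdef
        have ht : t < δ := by
          rw [htdef]
          split
          · next hβδ => rw [Ordinal.add_one_eq_succ]; exact hδlim.succ_lt hβδ
          · exact hδlim.pos
        obtain ⟨X, h1, h2, h3⟩ := Aux.build hδlim (fun y hy => hCδ.1 hy.1)
          (Aux.nacc_unb hCδ) ht
        refine ⟨X, fun _ => ⟨h1, h2, fun hβδ => ?_⟩⟩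
        intro y hy
        have h4 := h3 hy
        have h5 : t = β₀ + 1 := if_pos hβδ
        refine ⟨h4.1, lt_trans (lt_add_one β₀) ?_⟩
        exact h5 ▸ Set.mem_Ioi.1 h4.2
    · exact ⟨∅, fun hS' => absurd hS' h⟩
  choose C' hC' using hbuild
  refine ⟨C', fun δ hδ => ⟨(hC' δ hδ).1, (hC' δ hδ).2.1⟩, ?_⟩
  intro D hD
  have hstat := hβ₀ D hD
  refine ⟨fun δ hδ => hS.1 hδ.1, ?_⟩
  intro E hE
  obtain ⟨δ, hδG, hδE⟩ := hstat.2 E hE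
  refine ⟨δ, ⟨hδG.1, ?_⟩, hδE⟩
  intro y hy
  have h5 := (hC' δ hδG.1).2.2 hδG.2.1 hy
  refine hδG.2.2 ⟨h5.1, fun hmem => ?_⟩
  have h6 : β₀ + 1 ≤ y := Order.add_one_le_of_lt (Set.mem_Ioi.1 h5.2)
  exact absurd (Set.mem_Iio.1 hmem) (not_lt.2 h6)
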